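/- Assume the null independence-across-studies condition and that null p-values are stochastically at least uniform. Let S₁, S₂ be arbitrary selection rules, 𝒮_i = S_i(P_i), S_i = |𝒮_i|. Then the Bonferroni replicability procedure, which rejects exactly the features j ∈ 𝒮₁ ∩ 𝒮₂ with P_{1j} ≤ α₁/S₂ and P_{2j} ≤ (α−α₁)/S₁, has FWER for replicability analysis at most α: Pr(some j with (H_{1j},H_{2j}) ≠ (1,1) is rejected) ≤ α. (Theorem 1 instantiated with Bonferroni; equivalently, declaring replicated all features with Bonferroni r-value max(S₂P_{1j}/c, S₁P_{2j}/(1−c)) ≤ α, where c = α₁/α, controls the FWER at level α.) -/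

import Mathlib

open MeasureTheory ProbabilityTheory
open scoped ENNReal

lemma aux_key {Ω : Type*} [MeasurableSpace Ω] (μ : Measure Ω) [IsProbabilityMeasure μ]
    {m : ℕ} (Q R : Ω → Fin m → ℝ) (hR : Measurable R)
    (N : Finset (Fin m))
    (hind : ∀ j ∈ N, IndepFun (fun ω => Q ω j) R μ)
    (hunif : ∀ j ∈ N, ∀ x ∈ Set.Icc (0:ℝ) 1, μ {ω | Q ω j ≤ x} ≤ ENNReal.ofReal x)
    (S : (Fin m → ℝ) → Finset (Fin m)) (hS : ∀ j, MeasurableSet {p : Fin m → ℝ | j ∈ S p})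
    (c : ℝ) (hc : 0 ≤ c) (hc1 : c ≤ 1) :
    μ {ω | ∃ j ∈ N, j ∈ S (R ω) ∧ Q ω j ≤ c / (S (R ω)).card} ≤ ENNReal.ofReal c := by
  classical
  set T : Finset (Fin m) → Set Ω := fun s => R ⁻¹' {p | S p = s} with hT
  have hMmeas : ∀ s : Finset (Fin m), MeasurableSet {p : Fin m → ℝ | S p = s} := by
    intro s
    have h1 : {p : Fin m → ℝ | S p = s} = ⋂ j : Fin m,
        (if j ∈ s then {p : Fin m → ℝ | j ∈ S p} else {p : Fin m → ℝ | j ∈ S p}ᶜ) := by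
      ext p
      simp only [Set.mem_setOf_eq, Set.mem_iInter, Finset.ext_iff]
      constructor
      · intro h j
        by_cases hj : j ∈ s <;> simp [hj, h j]
      · intro h j
        have := h j
        by_cases hj : j ∈ s <;> simp only [hj, if_true, if_false, Set.mem_setOf_eq,
          Set.mem_compl_iff] at this <;> simp [hj, this]
    rw [h1]
    refine MeasurableSet.iInter fun j => ?_
    by_cases hj : j ∈ s
    · simpa [hj] using hS j
    · simpa [hj] using (hS j).compl
  have hTmeas : ∀ s, MeasurableSet (T s) := fun s => hR (hMmeas s)
  set f : Finset (Fin m) → ℝ≥0∞ := fun s => μ (T s) * ENNReal.ofReal (c / s.card) with hf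
  have hx : ∀ s : Finset (Fin m), ∀ j ∈ s, c / s.card ∈ Set.Icc (0:ℝ) 1 := by
    intro s j hj
    have hcard : (1:ℝ) ≤ s.card := by
      exact_mod_cast Finset.card_pos.mpr ⟨j, hj⟩
    constructor
    · positivity
    · exact le_trans (div_le_self hc hcard) hc1
  have hsub : {ω | ∃ j ∈ N, j ∈ S (R ω) ∧ Q ω j ≤ c / (S (R ω)).card} ⊆
      ⋃ j ∈ N, ⋃ s ∈ Finset.univ.filter (fun s : Finset (Fin m) => j ∈ s),
        T s ∩ {ω | Q ω j ≤ c / (s.card : ℝ)} := by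
    rintro ω ⟨j, hjN, hjS, hle⟩
    simp only [Set.mem_iUnion]
    exact ⟨j, hjN, S (R ω), by simp [hjS], rfl, hle⟩
  calc μ {ω | ∃ j ∈ N, j ∈ S (R ω) ∧ Q ω j ≤ c / (S (R ω)).card}
      ≤ μ (⋃ j ∈ N, ⋃ s ∈ Finset.univ.filter (fun s : Finset (Fin m) => j ∈ s),
        T s ∩ {ω | Q ω j ≤ c / (s.card : ℝ)}) := measure_mono hsub
    _ ≤ ∑ j ∈ N, μ (⋃ s ∈ Finset.univ.filter (fun s : Finset (Fin m) => j ∈ s),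
        T s ∩ {ω | Q ω j ≤ c / (s.card : ℝ)}) := measure_biUnion_finset_le _ _
    _ ≤ ∑ j ∈ N, ∑ s ∈ Finset.univ.filter (fun s : Finset (Fin m) => j ∈ s),
        μ (T s ∩ {ω | Q ω j ≤ c / (s.card : ℝ)}) := by
        exact Finset.sum_le_sum fun j _ => measure_biUnion_finset_le _ _
    _ ≤ ∑ j ∈ N, ∑ s ∈ Finset.univ.filter (fun s : Finset (Fin m) => j ∈ s), f s := by
        refine Finset.sum_le_sum fun j hj => Finset.sum_le_sum fun s hs => ?_
        rw [Finset.mem_filter] at hs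
        have hxs := hx s j hs.2
        have heq : T s ∩ {ω | Q ω j ≤ c / (s.card : ℝ)} =
            ((fun ω => Q ω j) ⁻¹' Set.Iic (c / (s.card : ℝ))) ∩ (R ⁻¹' {p | S p = s}) := by
          rw [Set.inter_comm]; rfl
        rw [heq, (hind j hj).measure_inter_preimage_eq_mul _ _ measurableSet_Iic (hMmeas s)]
        rw [hf]
        have h1 : μ ((fun ω => Q ω j) ⁻¹' Set.Iic (c / (s.card : ℝ))) ≤
            ENNReal.ofReal (c / (s.card : ℝ)) := hunif j hj _ hxs
        calc μ ((fun ω => Q ω j) ⁻¹' Set.Iic (c / (s.card : ℝ))) * μ (R ⁻¹' {p | S p = s})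
            ≤ ENNReal.ofReal (c / (s.card : ℝ)) * μ (T s) := by
              exact mul_le_mul' h1 le_rfl
          _ = μ (T s) * ENNReal.ofReal (c / s.card) := mul_comm _ _
    _ = ∑ j ∈ N, ∑ s : Finset (Fin m), if j ∈ s then f s else 0 := by
        simp [Finset.sum_filter]
    _ = ∑ s : Finset (Fin m), ∑ j ∈ N, if j ∈ s then f s else 0 := Finset.sum_comm
    _ ≤ ∑ s : Finset (Fin m), μ (T s) * ENNReal.ofReal c := by
        refine Finset.sum_le_sum fun s _ => ?_
        have h2 : ∑ j ∈ N, (if j ∈ s then f s else 0) = (N.filter (· ∈ s)).card • f s := by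
          rw [← Finset.sum_filter, Finset.sum_const]
        rw [h2]
        have hcardle : (N.filter (· ∈ s)).card ≤ s.card :=
          Finset.card_le_card fun j hj => (Finset.mem_filter.mp hj).2
        calc (N.filter (· ∈ s)).card • f s ≤ s.card • f s := smul_le_smul_of_nonneg_right
              hcardle zero_le |>.trans_eq rfl
          _ ≤ μ (T s) * ENNReal.ofReal c := by
            rcases Nat.eq_zero_or_pos s.card with h0 | h0
            · simp [h0]
            · have hne : (s.card : ℝ) ≠ 0 := by positivity
              rw [hf, nsmul_eq_mul, ← mul_assoc, mul_comm (s.card : ℝ≥0∞) (μ (T s)), mul_assoc]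
              refine mul_le_mul' le_rfl ?_
              rw [← ENNReal.ofReal_natCast, ← ENNReal.ofReal_mul (by positivity),
                mul_div_cancel₀ _ hne]
    _ = (∑ s : Finset (Fin m), μ (T s)) * ENNReal.ofReal c := by rw [Finset.sum_mul]
    _ ≤ 1 * ENNReal.ofReal c := by
        refine mul_le_mul' ?_ le_rfl
        have := sum_measure_le_measure_univ (μ := μ) (s := (Finset.univ : Finset (Finset (Fin m))))
          (t := T) (fun s _ => (hTmeas s).nullMeasurableSet) ?_
        · simpa using this
        · intro s _ t _ hst
          refine Disjoint.aedisjoint ?_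
          simp only [Set.disjoint_left]
          rintro ω h1 h2
          exact hst (h1.symm.trans h2)
    _ = ENNReal.ofReal c := one_mul _


/-- Theorem 1 instantiated with Bonferroni. Under the null
independence-across-studies condition and null p-values stochastically at least uniform,
the Bonferroni replicability procedure, which rejects exactly the features
`j ∈ 𝒮₁ ∩ 𝒮₂` (the sets selected from each study by arbitrary selection rules)
with `P1 j ≤ α₁ / |𝒮₂|` and `P2 j ≤ (α − α₁) / |𝒮₁|`, has FWER for replicability
analysis at most `α`.  Here `H1 j = false` means feature `j` is null in study 1
(similarly for study 2), and a replicability null is a feature with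
`H1 j = false ∨ H2 j = false`. -/
theorem bonferroni_replicability_fwer
    {Ω : Type*} [MeasurableSpace Ω] (μ : Measure Ω) [IsProbabilityMeasure μ]
    (m : ℕ) (P1 P2 : Ω → Fin m → ℝ) (hP1 : Measurable P1) (hP2 : Measurable P2)
    (H1 H2 : Fin m → Bool)
    (hrange1 : ∀ ω j, P1 ω j ∈ Set.Icc (0:ℝ) 1) (hrange2 : ∀ ω j, P2 ω j ∈ Set.Icc (0:ℝ) 1)
    -- null p-values are stochastically at least uniform
    (hunif1 : ∀ j, H1 j = false → ∀ x ∈ Set.Icc (0:ℝ) 1,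
      μ {ω | P1 ω j ≤ x} ≤ ENNReal.ofReal x)
    (hunif2 : ∀ j, H2 j = false → ∀ x ∈ Set.Icc (0:ℝ) 1,
      μ {ω | P2 ω j ≤ x} ≤ ENNReal.ofReal x)
    -- null independence-across-studies condition
    (hind1 : ∀ j, (H1 j = false ∨ H2 j = false) → H1 j = false →
      IndepFun (fun ω => P1 ω j) P2 μ)
    (hind2 : ∀ j, (H1 j = false ∨ H2 j = false) → H2 j = false →
      IndepFun (fun ω => P2 ω j) P1 μ)
    -- arbitrary (measurable) selection rules
    (S1 S2 : (Fin m → ℝ) → Finset (Fin m))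
    (hS1 : ∀ j, MeasurableSet {p : Fin m → ℝ | j ∈ S1 p})
    (hS2 : ∀ j, MeasurableSet {p : Fin m → ℝ | j ∈ S2 p})
    (α α₁ : ℝ) (hα : α ∈ Set.Ioo (0:ℝ) 1) (hα₁ : α₁ ∈ Set.Ioo (0:ℝ) α) :
    μ {ω | ∃ j, (H1 j = false ∨ H2 j = false) ∧
        j ∈ S1 (P1 ω) ∧ j ∈ S2 (P2 ω) ∧
        P1 ω j ≤ α₁ / (S2 (P2 ω)).card ∧ P2 ω j ≤ (α - α₁) / (S1 (P1 ω)).card}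
      ≤ ENNReal.ofReal α := by
  classical
  have h1 : (0:ℝ) ≤ α₁ := le_of_lt hα₁.1
  have h2 : α₁ ≤ 1 := le_of_lt (hα₁.2.trans hα.2)
  have h3 : (0:ℝ) ≤ α - α₁ := sub_nonneg.mpr hα₁.2.le
  have h4 : α - α₁ ≤ 1 := by linarith [hα.2]
  set N1 : Finset (Fin m) := Finset.univ.filter (fun j => H1 j = false) with hN1
  set N2 : Finset (Fin m) := Finset.univ.filter (fun j => H2 j = false) with hN2
  have hN1mem : ∀ j, j ∈ N1 ↔ H1 j = false := by intro j; simp [hN1]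
  have hN2mem : ∀ j, j ∈ N2 ↔ H2 j = false := by intro j; simp [hN2]
  have hA := aux_key μ P1 P2 hP2 N1
    (fun j hj => hind1 j (Or.inl ((hN1mem j).mp hj)) ((hN1mem j).mp hj))
    (fun j hj => hunif1 j ((hN1mem j).mp hj)) S2 hS2 α₁ h1 h2
  have hB := aux_key μ P2 P1 hP1 N2
    (fun j hj => hind2 j (Or.inr ((hN2mem j).mp hj)) ((hN2mem j).mp hj))
    (fun j hj => hunif2 j ((hN2mem j).mp hj)) S1 hS1 (α - α₁) h3 h4
  have hsub : {ω | ∃ j, (H1 j = false ∨ H2 j = false) ∧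
        j ∈ S1 (P1 ω) ∧ j ∈ S2 (P2 ω) ∧
        P1 ω j ≤ α₁ / (S2 (P2 ω)).card ∧ P2 ω j ≤ (α - α₁) / (S1 (P1 ω)).card} ⊆
      {ω | ∃ j ∈ N1, j ∈ S2 (P2 ω) ∧ P1 ω j ≤ α₁ / (S2 (P2 ω)).card} ∪
      {ω | ∃ j ∈ N2, j ∈ S1 (P1 ω) ∧ P2 ω j ≤ (α - α₁) / (S1 (P1 ω)).card} := by
    rintro ω ⟨j, hnull, hj1, hj2, hp1, hp2⟩
    rcases hnull with h | h
    · exact Or.inl ⟨j, (hN1mem j).mpr h, hj2, hp1⟩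
    · exact Or.inr ⟨j, (hN2mem j).mpr h, hj1, hp2⟩
  calc μ {ω | ∃ j, (H1 j = false ∨ H2 j = false) ∧
        j ∈ S1 (P1 ω) ∧ j ∈ S2 (P2 ω) ∧
        P1 ω j ≤ α₁ / (S2 (P2 ω)).card ∧ P2 ω j ≤ (α - α₁) / (S1 (P1 ω)).card}
      ≤ μ ({ω | ∃ j ∈ N1, j ∈ S2 (P2 ω) ∧ P1 ω j ≤ α₁ / (S2 (P2 ω)).card} ∪
          {ω | ∃ j ∈ N2, j ∈ S1 (P1 ω) ∧ P2 ω j ≤ (α - α₁) / (S1 (P1 ω)).card}) :=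
        measure_mono hsub
    _ ≤ μ {ω | ∃ j ∈ N1, j ∈ S2 (P2 ω) ∧ P1 ω j ≤ α₁ / (S2 (P2 ω)).card} +
        μ {ω | ∃ j ∈ N2, j ∈ S1 (P1 ω) ∧ P2 ω j ≤ (α - α₁) / (S1 (P1 ω)).card} :=
        measure_union_le _ _
    _ ≤ ENNReal.ofReal α₁ + ENNReal.ofReal (α - α₁) := add_le_add hA hB
    _ = ENNReal.ofReal α := by
        rw [← ENNReal.ofReal_add h1 h3]; ring_nf
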